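/- Let A_1, …, A_N be n×n matrices with nonnegative real entries, each with spectral radius at most 1. Suppose there is a nonempty set E = {v_1, …, v_m} of nonzero vectors in ℝ^n such that each v_t is an eigenvector of every A_i, i.e., for each i and t there is a real λ_{i,t} with A_i v_t = λ_{i,t} v_t. Then there exists an integer q ≥ 1 such that for every p ≥ 1, every word ω ∈ {1,…,N}^p containing every letter 1, …, N at least once, and every x in the real linear span of E, the limit lim_{k→∞} A_ω^{kq} x = ξ_x exists, is independent of the word ω, and satisfies A_ω^q ξ_x = ξ_x, where A_ω = A_{ω_p} A_{ω_{p−1}} ⋯ A_{ω_1}. -/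

import Mathlib

open Filter Topology

lemma charpoly_eval_eq {n : ℕ} {K : Type*} [Field K] (M : Matrix (Fin n) (Fin n) K) (r : K) :
    M.charpoly.eval r = (Matrix.scalar (Fin n) r - M).det := by
  rw [Matrix.charpoly, eval_det, Matrix.matPolyEquiv_charmatrix]
  simp

lemma isRoot_of_eigen {n : ℕ} {K : Type*} [Field K] [DecidableEq K]
    (M : Matrix (Fin n) (Fin n) K) (w : Fin n → K) (hw : w ≠ 0) (μ : K)
    (h : M.mulVec w = μ • w) : M.charpoly.IsRoot μ := by
  have hmv : (Matrix.scalar (Fin n) μ - M).mulVec w = 0 := by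
    rw [Matrix.sub_mulVec, h]
    have : (Matrix.scalar (Fin n) μ).mulVec w = μ • w := by
      funext i; simp [Matrix.scalar, Matrix.mulVec_diagonal]
    rw [this, sub_self]
  have hdet : (Matrix.scalar (Fin n) μ - M).det = 0 :=
    (Matrix.exists_mulVec_eq_zero_iff).mp ⟨w, hw, hmv⟩
  rw [Polynomial.IsRoot, charpoly_eval_eq, hdet]

/-- The matrix product `A_{ω_p} ⋯ A_{ω_1}` associated to a word `ω`. -/
def wordProdR {n N : ℕ} (A : Fin N → Matrix (Fin n) (Fin n) ℝ) :
    ∀ {p : ℕ}, (Fin p → Fin N) → Matrix (Fin n) (Fin n) ℝ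
  | 0, _ => 1
  | p + 1, ω => A (ω (Fin.last p)) * wordProdR A fun i : Fin p => ω i.castSucc

theorem stmt_5 (n N m : ℕ) (A : Fin N → Matrix (Fin n) (Fin n) ℝ)
    (hpos : ∀ i, ∀ a b, 0 ≤ A i a b)
    (hρ : ∀ i, ∀ z : ℂ, (Matrix.charpoly ((A i).map (fun r : ℝ => (r : ℂ)))).IsRoot z →
      ‖z‖ ≤ 1)
    (hm : 1 ≤ m) (v : Fin m → (Fin n → ℝ)) (hv0 : ∀ t, v t ≠ 0)
    (heig : ∀ i t, ∃ lam : ℝ, (A i).mulVec (v t) = lam • v t) :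
    ∃ q : ℕ, 1 ≤ q ∧
      ∀ x ∈ Submodule.span ℝ (Set.range v), ∃ ξ : Fin n → ℝ,
        ∀ p : ℕ, 1 ≤ p → ∀ ω : Fin p → Fin N, (∀ i : Fin N, ∃ t, ω t = i) →
          Tendsto (fun k => ((wordProdR A ω) ^ (k * q)).mulVec x) atTop (nhds ξ) ∧
            ((wordProdR A ω) ^ q).mulVec ξ = ξ := by
  classical
  choose lam hlam using heig
  -- eigenvalue bound
  have habs : ∀ i t, |lam i t| ≤ 1 := by
    intro i t
    have hroot : ((A i).map (fun r : ℝ => (r : ℂ))).charpoly.IsRoot ((lam i t : ℂ)) := by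
      apply isRoot_of_eigen _ (fun j => ((v t j : ℂ)))
      · intro h0
        apply hv0 t
        funext j
        have := congrFun h0 j
        simpa using this
      · funext j
        have h1 := (RingHom.map_mulVec (Complex.ofRealHom) (A i) (v t) j).symm
        have h2 : (A i).mulVec (v t) j = lam i t * v t j := by
          rw [hlam i t]; rfl
        simp only [Complex.ofRealHom_eq_coe] at h1
        calc ((A i).map (fun r : ℝ => (r : ℂ))).mulVec (fun j => ((v t j : ℂ))) j
            = (((A i).mulVec (v t) j : ℝ) : ℂ) := by
              rw [← h1]; rfl
          _ = ((lam i t : ℂ)) * ((v t j : ℂ)) := by rw [h2]; push_cast; ring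
          _ = (((lam i t : ℂ)) • fun j => ((v t j : ℂ))) j := rfl
    have := hρ i _ hroot
    simpa using this
  -- word eigenvalues
  have hword : ∀ (p : ℕ) (ω : Fin p → Fin N) (t : Fin m),
      (wordProdR A ω).mulVec (v t) = (∏ j, lam (ω j) t) • v t := by
    intro p
    induction p with
    | zero => intro ω t; simp [wordProdR]
    | succ p ih =>
      intro ω t
      show (A (ω (Fin.last p)) * wordProdR A fun i : Fin p => ω i.castSucc).mulVec (v t) = _
      rw [← Matrix.mulVec_mulVec, ih, Matrix.mulVec_smul, hlam, Fin.prod_univ_castSucc,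
        smul_smul, mul_comm]
  have hpow : ∀ (p : ℕ) (ω : Fin p → Fin N) (t : Fin m) (r : ℕ),
      ((wordProdR A ω) ^ r).mulVec (v t) = ((∏ j, lam (ω j) t) ^ r) • v t := by
    intro p ω t r
    induction r with
    | zero => simp
    | succ r ih =>
      rw [pow_succ', ← Matrix.mulVec_mulVec, ih, Matrix.mulVec_smul, hword, smul_smul,
        ← pow_succ]
  refine ⟨2, by norm_num, ?_⟩
  intro x hx
  obtain ⟨c, hc⟩ := (Finsupp.mem_span_range_iff_exists_finsupp).mp hx
  refine ⟨∑ t, (if ∀ i, |lam i t| = 1 then c t • v t else 0), ?_⟩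
  intro p hp ω hsurj
  set W := wordProdR A ω with hW
  set μ : Fin m → ℝ := fun t => ∏ j, lam (ω j) t with hμ
  -- dichotomy facts
  have hsq : ∀ t, (∀ i, |lam i t| = 1) → (μ t) ^ 2 = 1 := by
    intro t ht
    have : (μ t) ^ 2 = ∏ j, (lam (ω j) t) ^ 2 := by
      rw [hμ]; rw [← Finset.prod_pow]
    rw [this]
    apply Finset.prod_eq_one
    intro j _
    have := ht (ω j)
    nlinarith [abs_nonneg (lam (ω j) t), sq_abs (lam (ω j) t)]
  have hlt : ∀ t, ¬ (∀ i, |lam i t| = 1) → |μ t| < 1 := by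
    intro t ht
    push_neg at ht
    obtain ⟨i, hi⟩ := ht
    have hi' : |lam i t| < 1 := lt_of_le_of_ne (habs i t) hi
    obtain ⟨j0, hj0⟩ := hsurj i
    have habsμ : |μ t| = ∏ j, |lam (ω j) t| := by
      rw [hμ, Finset.abs_prod]
    rw [habsμ, ← Finset.mul_prod_erase Finset.univ _ (Finset.mem_univ j0)]
    have hrest : ∏ j ∈ Finset.univ.erase j0, |lam (ω j) t| ≤ 1 :=
      Finset.prod_le_one (fun j _ => abs_nonneg _) (fun j _ => habs _ _)
    calc |lam (ω j0) t| * ∏ j ∈ Finset.univ.erase j0, |lam (ω j) t|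
        ≤ |lam (ω j0) t| * 1 := by
          apply mul_le_mul_of_nonneg_left hrest (abs_nonneg _)
      _ = |lam i t| := by rw [mul_one, hj0]
      _ < 1 := hi'
  -- sequence rewrite
  have hseq : ∀ k : ℕ, (W ^ (k * 2)).mulVec x = ∑ t, c t • (((μ t) ^ 2) ^ k) • v t := by
    intro k
    have hx' : x = ∑ t, c t • v t := by
      rw [← hc]
      rw [Finsupp.sum_fintype]
      intro t; simp
    rw [hx', ← Matrix.mulVecLin_apply, map_sum]
    apply Finset.sum_congr rfl
    intro t _
    rw [map_smul, Matrix.mulVecLin_apply, hpow, hμ, ← pow_mul, mul_comm 2 k]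
  constructor
  · rw [show (fun k => (W ^ (k * 2)).mulVec x) = fun k => ∑ t, c t • (((μ t) ^ 2) ^ k) • v t
      from funext hseq]
    apply tendsto_finset_sum
    intro t _
    by_cases ht : ∀ i, |lam i t| = 1
    · rw [if_pos ht]
      have h1 := hsq t ht
      simp only [h1, one_pow, one_smul]
      exact tendsto_const_nhds
    · rw [if_neg ht]
      have h1 : |(μ t) ^ 2| < 1 := by
        rw [abs_pow]
        calc |μ t| ^ 2 ≤ |μ t| * 1 := by nlinarith [abs_nonneg (μ t), hlt t ht]
          _ < 1 := by rw [mul_one]; exact hlt t ht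
      have h2 : Tendsto (fun k : ℕ => ((μ t) ^ 2) ^ k) atTop (nhds 0) :=
        tendsto_pow_atTop_nhds_zero_of_abs_lt_one h1
      have h3 := (h2.smul_const (v t)).const_smul (c t)
      simpa using h3
  · rw [← Matrix.mulVecLin_apply, map_sum]
    apply Finset.sum_congr rfl
    intro t _
    split_ifs with ht
    · rw [map_smul, Matrix.mulVecLin_apply, hpow, hsq t ht, one_smul]
    · rw [map_zero]
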